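/- arXiv:2401.02289 — 2 statements merged into one kernel-verified Lean document; each statement's English description precedes it below -/
import Mathlib

section
/- Let α and β be finite nonempty types with decidable equality and let G be a simple graph on α × β with at least one edge such that every edge joins vertices with equal first coordinate, i.e. G.Adj (i,j) (k,l) → i = k for all i, k : α and j, l : β. Then the graph Laplacian state ρ_G is separable (as a state on ℂ^α ⊗ ℂ^β). -/
open Matrix Kronecker ComplexOrder

noncomputable section

/-- A density matrix: positive semidefinite with trace 1. -/
def IsDensityMatrix {n : Type*} [Fintype n] (ρ : Matrix n n ℂ) : Prop :=
  ρ.PosSemidef ∧ ρ.trace = 1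

/-- Separability of a bipartite density matrix: a convex combination of Kronecker
products of density matrices of the subsystems. -/
def Separable {α β : Type*} [Fintype α] [Fintype β]
    (ρ : Matrix (α × β) (α × β) ℂ) : Prop :=
  ∃ (n : ℕ) (p : Fin n → ℝ) (σ : Fin n → Matrix α α ℂ) (τ : Fin n → Matrix β β ℂ),
    (∀ k, 0 ≤ p k) ∧ (∑ k, p k = 1) ∧
    (∀ k, (σ k).PosSemidef ∧ (σ k).trace = 1) ∧
    (∀ k, (τ k).PosSemidef ∧ (τ k).trace = 1) ∧
    ρ = ∑ k, (p k : ℂ) • (σ k ⊗ₖ τ k)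

/-- The `(x,y)`-block of a bipartite matrix. -/
def matBlock {α β : Type*} (ρ : Matrix (α × β) (α × β) ℂ) (x y : α) :
    Matrix β β ℂ :=
  Matrix.of fun j l => ρ (x, j) (y, l)

/-- The graph Laplacian quantum state of a simple graph. -/
def lapState {V : Type*} [Fintype V] [DecidableEq V] (G : SimpleGraph V)
    [DecidableRel G.Adj] : Matrix V V ℂ :=
  ((2 * G.edgeFinset.card : ℂ))⁻¹ • G.lapMatrix ℂ

set_option linter.unusedSectionVars false
set_option maxHeartbeats 1000000
/-- PSD matrices over ℝ map to PSD matrices over ℂ. -/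
lemma posSemidef_map_ofReal {n : Type*} [Fintype n] [DecidableEq n]
    {A : Matrix n n ℝ} (hA : A.PosSemidef) :
    (A.map Complex.ofReal).PosSemidef := by
  open scoped MatrixOrder in obtain ⟨B, rfl⟩ := CStarAlgebra.nonneg_iff_eq_star_mul_self.mp hA.nonneg
  have hB : (star B * B).map Complex.ofReal = (B.map Complex.ofReal)ᴴ * B.map Complex.ofReal := by
    ext a b
    simp [Matrix.mul_apply, Matrix.conjTranspose_apply]
  rw [hB]
  exact Matrix.posSemidef_conjTranspose_mul_self _

lemma psd_smul_real {n : Type*} [Fintype n] {M : Matrix n n ℂ} (hM : M.PosSemidef)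
    {c : ℝ} (hc : 0 ≤ c) : ((c : ℂ) • M).PosSemidef := by
  constructor
  · unfold Matrix.IsHermitian
    rw [Matrix.conjTranspose_smul, hM.1]
    congr 1
    simp
  · exact (hM.smul (show (0:ℂ) ≤ (c:ℂ) by exact_mod_cast hc)).2

lemma lapMatrix_complex_eq_map {V : Type*} [Fintype V] [DecidableEq V]
    (G : SimpleGraph V) [DecidableRel G.Adj] :
    G.lapMatrix ℂ = (G.lapMatrix ℝ).map Complex.ofReal := by
  ext v w
  simp only [SimpleGraph.lapMatrix, Matrix.sub_apply, Matrix.map_apply, SimpleGraph.degMatrix,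
    SimpleGraph.adjMatrix_apply, Matrix.diagonal_apply, Complex.ofReal_sub]
  split_ifs <;> simp

lemma posSemidef_lapMatrix_complex {V : Type*} [Fintype V] [DecidableEq V]
    (G : SimpleGraph V) [DecidableRel G.Adj] : (G.lapMatrix ℂ).PosSemidef := by
  rw [lapMatrix_complex_eq_map]
  exact posSemidef_map_ofReal (G.posSemidef_lapMatrix ℝ)

lemma trace_lapMatrix_complex {V : Type*} [Fintype V] [DecidableEq V]
    (G : SimpleGraph V) [DecidableRel G.Adj] :
    (G.lapMatrix ℂ).trace = (2 * G.edgeFinset.card : ℕ) := by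
  rw [SimpleGraph.lapMatrix, Matrix.trace_sub]
  have h1 : (G.degMatrix ℂ).trace = ∑ v, (G.degree v : ℂ) := by
    simp [SimpleGraph.degMatrix, Matrix.trace_diagonal]
  have h2 : (G.adjMatrix ℂ).trace = 0 := by
    simp [Matrix.trace, Matrix.diag]
  rw [h1, h2, sub_zero, ← Nat.cast_sum]
  norm_cast
  exact G.sum_degrees_eq_twice_card_edges
set_option linter.unusedSectionVars false
noncomputable section

section Fiber
/-- The fiber graph over `i : α` of a graph on `α × β`. -/
def fiberGraph {α β : Type*} (G : SimpleGraph (α × β)) (i : α) : SimpleGraph β where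
  Adj j l := G.Adj (i, j) (i, l)
  symm := ⟨fun _ _ h => G.symm.symm _ _ h⟩
  loopless := ⟨fun _ h => G.loopless.irrefl _ h⟩

instance {α β : Type*} (G : SimpleGraph (α × β)) [DecidableRel G.Adj] (i : α) :
    DecidableRel (fiberGraph G i).Adj := fun j l => inferInstanceAs (Decidable (G.Adj (i, j) (i, l)))

variable {α β : Type*} [Fintype α] [Fintype β] [DecidableEq α] [DecidableEq β]
  (G : SimpleGraph (α × β)) [DecidableRel G.Adj]
  (hAdj : ∀ (i k : α) (j l : β), G.Adj (i, j) (k, l) → i = k)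

include hAdj

lemma fiber_neighborFinset (i : α) (j : β) :
    G.neighborFinset (i, j) =
      ((fiberGraph G i).neighborFinset j).map ⟨fun l => (i, l), fun _ _ h => (Prod.mk.injEq _ _ _ _ ▸ h).2⟩ := by
  ext ⟨k, l⟩
  simp only [SimpleGraph.mem_neighborFinset, Finset.mem_map, Function.Embedding.coeFn_mk,
    Prod.mk.injEq]
  constructor
  · intro h
    have hik := hAdj i k j l h
    subst hik
    exact ⟨l, h, rfl⟩
  · rintro ⟨l', h, he⟩
    cases he
    exact h

lemma fiber_degree (i : α) (j : β) : G.degree (i, j) = (fiberGraph G i).degree j := by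
  rw [SimpleGraph.degree, SimpleGraph.degree, fiber_neighborFinset G hAdj, Finset.card_map]

lemma lap_entry (i k : α) (j l : β) :
    G.lapMatrix ℂ (i, j) (k, l) = if i = k then (fiberGraph G i).lapMatrix ℂ j l else 0 := by
  simp only [SimpleGraph.lapMatrix, Matrix.sub_apply, SimpleGraph.degMatrix,
    Matrix.diagonal_apply, SimpleGraph.adjMatrix_apply, Prod.mk.injEq]
  by_cases hik : i = k
  · subst hik
    rw [fiber_degree G hAdj]
    simp only [true_and, if_true]
    rfl
  · have hadj : ¬ G.Adj (i, j) (k, l) := fun h => hik (hAdj i k j l h)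
    simp [hik, hadj]

lemma lap_decomp :
    G.lapMatrix ℂ = ∑ i, (Matrix.single i i (1 : ℂ)) ⊗ₖ (fiberGraph G i).lapMatrix ℂ := by
  ext ⟨i, j⟩ ⟨k, l⟩
  rw [lap_entry G hAdj, Matrix.sum_apply]
  simp only [Matrix.kroneckerMap_apply, Matrix.single]
  rw [Finset.sum_eq_single i]
  · simp only [Matrix.of_apply, and_self]
    by_cases hik : i = k <;> simp [hik]
  · intro x _ hx
    have hc : ¬ (x = i ∧ x = k) := fun hc => hx hc.1
    rw [Matrix.of_apply, if_neg hc, zero_mul]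
  · simp

lemma fiber_edge_sum :
    ∑ i, 2 * (fiberGraph G i).edgeFinset.card = 2 * G.edgeFinset.card := by
  have h : ∀ i : α, 2 * (fiberGraph G i).edgeFinset.card = ∑ j, G.degree (i, j) := by
    intro i
    rw [← (fiberGraph G i).sum_degrees_eq_twice_card_edges]
    exact Finset.sum_congr rfl fun j _ => (fiber_degree G hAdj i j).symm
  simp_rw [h]
  rw [← G.sum_degrees_eq_twice_card_edges, Fintype.sum_prod_type]

omit hAdj in
lemma fiber_lap_zero (i : α) (h : (fiberGraph G i).edgeFinset.card = 0) :
    (fiberGraph G i).lapMatrix ℂ = 0 := by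
  have hemp := Finset.card_eq_zero.mp h
  have hno : ∀ j l, ¬ (fiberGraph G i).Adj j l := by
    intro j l hjl
    have hm : s(j, l) ∈ (fiberGraph G i).edgeFinset := by
      rw [SimpleGraph.mem_edgeFinset]
      exact hjl
    rw [hemp] at hm
    exact absurd hm (Finset.notMem_empty _)
  have hdeg : ∀ j, (fiberGraph G i).degree j = 0 := by
    intro j
    simp only [SimpleGraph.degree, Finset.card_eq_zero]
    ext l
    simp only [SimpleGraph.mem_neighborFinset, Finset.notMem_empty, iff_false]
    exact hno j l
  ext j l
  simp [SimpleGraph.lapMatrix, SimpleGraph.degMatrix, Matrix.diagonal_apply, hno j l, hdeg]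
end Fiber

def lapState' {V : Type*} [Fintype V] [DecidableEq V] (G : SimpleGraph V)
    [DecidableRel G.Adj] : Matrix V V ℂ :=
  ((2 * G.edgeFinset.card : ℂ))⁻¹ • G.lapMatrix ℂ

lemma std_diag {α : Type*} [Fintype α] [DecidableEq α] (i : α) :
    Matrix.single i i (1 : ℂ)
      = Matrix.diagonal (fun x => if x = i then 1 else 0) := by
  ext a b
  simp only [Matrix.single, Matrix.of_apply, Matrix.diagonal_apply]
  by_cases hai : a = i <;> by_cases hab : a = b <;> aesop

lemma std_psd {α : Type*} [Fintype α] [DecidableEq α] (i : α) :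
    (Matrix.single i i (1 : ℂ)).PosSemidef := by
  rw [std_diag]
  refine Matrix.PosSemidef.diagonal ?_
  intro x
  by_cases hx : x = i <;> simp [hx]

lemma std_trace {α : Type*} [Fintype α] [DecidableEq α] (i : α) :
    (Matrix.single i i (1 : ℂ)).trace = 1 := by
  rw [std_diag, Matrix.trace_diagonal]
  simp

theorem equal_first_coordinate_edges_separable
    {α β : Type*} [Fintype α] [Fintype β] [Nonempty α] [Nonempty β]
    [DecidableEq α] [DecidableEq β]
    (G : SimpleGraph (α × β)) [DecidableRel G.Adj]
    (hE : G.edgeFinset.Nonempty)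
    (hAdj : ∀ (i k : α) (j l : β), G.Adj (i, j) (k, l) → i = k) :
    Separable (lapState G) := by
  classical
  set C : ℕ := G.edgeFinset.card with hCdef
  have hC : 0 < C := Finset.card_pos.mpr hE
  have hCR : (2 * C : ℝ) ≠ 0 := by positivity
  have hCC : (2 * (C : ℂ)) ≠ 0 := by
    simp only [ne_eq, mul_eq_zero, OfNat.ofNat_ne_zero, Nat.cast_eq_zero, false_or]
    omega
  set c : α → ℕ := fun i => (fiberGraph G i).edgeFinset.card with hcdef
  set e : Fin (Fintype.card α) ≃ α := (Fintype.equivFin α).symm with hedef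
  -- the data
  refine ⟨Fintype.card α,
    fun k => (2 * c (e k) : ℝ) / (2 * C : ℝ),
    fun k => Matrix.single (e k) (e k) 1,
    fun k => if c (e k) = 0 then ((Fintype.card β : ℂ))⁻¹ • (1 : Matrix β β ℂ)
             else lapState (fiberGraph G (e k)),
    ?_, ?_, ?_, ?_, ?_⟩
  · intro k
    positivity
  · have hs : ∑ i, c i = C := by
      have h := fiber_edge_sum G hAdj
      rw [← Finset.mul_sum] at h
      exact Nat.eq_of_mul_eq_mul_left (by norm_num) h
    rw [← Finset.sum_div, div_eq_one_iff_eq hCR,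
      Equiv.sum_comp e (fun i => (2 * c i : ℝ)), ← Finset.mul_sum]
    norm_cast
    rw [hs]
  · intro k
    exact ⟨std_psd _, std_trace _⟩
  · intro k
    by_cases hck : c (e k) = 0
    · simp only [hck, if_true]
      constructor
      · have h := psd_smul_real (Matrix.PosSemidef.one : (1 : Matrix β β ℂ).PosSemidef)
          (inv_nonneg.mpr (Nat.cast_nonneg (Fintype.card β)))
        have hcast : (((((Fintype.card β : ℝ))⁻¹ : ℝ)) : ℂ) = ((Fintype.card β : ℂ))⁻¹ := by
          push_cast; ring
        rwa [hcast] at h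
      · rw [Matrix.trace_smul, Matrix.trace_one, smul_eq_mul]
        rw [inv_mul_cancel₀]
        simp [Fintype.card_ne_zero]
    · simp only [hck, if_false]
      constructor
      · unfold lapState
        have hcast : ((2 * ((fiberGraph G (e k)).edgeFinset.card : ℂ)))⁻¹
            = (((2 * ((fiberGraph G (e k)).edgeFinset.card : ℝ))⁻¹ : ℝ) : ℂ) := by
          push_cast; ring
        rw [hcast]
        exact psd_smul_real (posSemidef_lapMatrix_complex _) (inv_nonneg.mpr (by positivity))
      · have h2c : (2 * ((fiberGraph G (e k)).edgeFinset.card : ℂ)) ≠ 0 := by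
          simp only [ne_eq, mul_eq_zero, OfNat.ofNat_ne_zero, Nat.cast_eq_zero, false_or]
          exact hck
        unfold lapState
        rw [Matrix.trace_smul, trace_lapMatrix_complex, smul_eq_mul]
        push_cast
        exact inv_mul_cancel₀ h2c
  · -- the sum identity
    rw [show lapState G = ((2 * (C : ℂ)))⁻¹ • G.lapMatrix ℂ from rfl,
      lap_decomp G hAdj, Finset.smul_sum]
    rw [← Equiv.sum_comp e (fun i => (2 * (C : ℂ))⁻¹ •
      (Matrix.single i i (1:ℂ) ⊗ₖ (fiberGraph G i).lapMatrix ℂ))]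
    refine Finset.sum_congr rfl fun k _ => ?_
    by_cases hck : c (e k) = 0
    · rw [fiber_lap_zero G (e k) hck]
      simp [hck, Matrix.kronecker_zero]
    · simp only [hck, if_false]
      have hτ : lapState (fiberGraph G (e k))
          = (2 * ((c (e k) : ℂ)))⁻¹ • (fiberGraph G (e k)).lapMatrix ℂ := rfl
      rw [hτ, Matrix.kronecker_smul, smul_smul]
      congr 1
      have hc0 : ((c (e k)) : ℂ) ≠ 0 := Nat.cast_ne_zero.mpr hck
      have hC0 : ((C : ℂ)) ≠ 0 := Nat.cast_ne_zero.mpr hC.ne'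
      push_cast
      field_simp
end
end
end

section
/- Let α and β be finite nonempty types and let ρ : Matrix (α × β) (α × β) ℂ be a density matrix that is block-diagonal, i.e. ρ (x,j) (y,l) = 0 whenever x ≠ y. Then ρ is separable. -/
open Matrix Kronecker ComplexOrder

noncomputable section

section Aux

variable {n : Type*} [Fintype n] [DecidableEq n]

lemma star_single_one (i : n) : star (Pi.single i (1:ℂ) : n → ℂ) = Pi.single i (1:ℂ) := by
  ext a; by_cases h : a = i <;> simp [Pi.single_apply, h]

lemma quad_single {M : Matrix n n ℂ} (i : n) :
    star (Pi.single i (1:ℂ)) ⬝ᵥ M *ᵥ Pi.single i (1:ℂ) = M i i := by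
  rw [star_single_one, single_dotProduct, Matrix.mulVec_single_one, Matrix.col_apply]
  ring

lemma psd_diag_nonneg {M : Matrix n n ℂ} (hM : M.PosSemidef) (i : n) : 0 ≤ M i i := by
  have := hM.dotProduct_mulVec_nonneg (Pi.single i 1)
  rwa [quad_single] at this

lemma psd_trace_zero_eq_zero {M : Matrix n n ℂ} (hM : M.PosSemidef)
    (h : M.trace = 0) : M = 0 := by
  have hdiag : ∀ i, M i i = 0 := by
    intro i
    have := (Finset.sum_eq_zero_iff_of_nonneg (fun j _ => psd_diag_nonneg hM j)).mp h i
      (Finset.mem_univ i)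
    exact this
  have hcol : ∀ i, M *ᵥ Pi.single i 1 = 0 := by
    intro i
    refine (hM.dotProduct_mulVec_zero_iff _).mp ?_
    rw [quad_single, hdiag i]
  ext j l
  have := congrFun (hcol l) j
  simpa [Matrix.mulVec_single] using this

lemma psd_stdBasis (i : n) : (Matrix.single i i (1:ℂ)).PosSemidef := by
  refine Matrix.PosSemidef.of_dotProduct_mulVec_nonneg ?_ ?_
  · ext a b
    simp [Matrix.conjTranspose_apply, Matrix.single, and_comm]
  · intro v
    have : (Matrix.single i i (1:ℂ)) *ᵥ v = Pi.single i (v i) := by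
      ext a
      simp [Matrix.mulVec, dotProduct, Matrix.single, Pi.single_apply,
        Finset.sum_ite_eq, ite_and, eq_comm]
    rw [this, dotProduct_single]
    exact star_mul_self_nonneg (v i)

end Aux

section Aux2

variable {n : Type*} [Fintype n] [DecidableEq n]

lemma psd_smul {M : Matrix n n ℂ} (hM : M.PosSemidef) {c : ℂ} (hc : 0 ≤ c) :
    (c • M).PosSemidef := by
  refine Matrix.PosSemidef.of_dotProduct_mulVec_nonneg ?_ ?_
  · show (c • M)ᴴ = c • M
    rw [Matrix.conjTranspose_smul, hM.1, (IsSelfAdjoint.of_nonneg hc)]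
  · intro v
    rw [Matrix.smul_mulVec, dotProduct_smul, smul_eq_mul]
    exact mul_nonneg hc (hM.dotProduct_mulVec_nonneg v)

end Aux2

theorem block_diagonal_density_separable
    {α β : Type*} [Fintype α] [Fintype β] [Nonempty α] [Nonempty β]
    (ρ : Matrix (α × β) (α × β) ℂ) (hρ : IsDensityMatrix ρ)
    (hzero : ∀ (x y : α) (j l : β), x ≠ y → ρ (x, j) (y, l) = 0) :
    Separable ρ := by
  classical
  obtain ⟨hPSD, htr⟩ := hρ
  -- blocks are PSD
  have hblock : ∀ x : α, (matBlock ρ x x).PosSemidef := by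
    intro x
    refine Matrix.PosSemidef.of_dotProduct_mulVec_nonneg ?_ ?_
    · ext j l
      have h := congrFun (congrFun hPSD.1 (x, j)) (x, l)
      simpa [Matrix.conjTranspose_apply, matBlock] using h
    · intro v
      have h := hPSD.dotProduct_mulVec_nonneg (fun q => if q.1 = x then v q.2 else 0)
      have key : star (fun q : α × β => if q.1 = x then v q.2 else 0) ⬝ᵥ
          ρ *ᵥ (fun q : α × β => if q.1 = x then v q.2 else 0)
          = star v ⬝ᵥ (matBlock ρ x x) *ᵥ v := by
        simp [dotProduct, Matrix.mulVec, matBlock, Fintype.sum_prod_type,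
          apply_ite (star : ℂ → ℂ), ite_mul, mul_ite, Finset.mul_sum, Finset.sum_ite_eq',
          Finset.sum_ite_eq]
      rwa [key] at h
  set t : α → ℂ := fun x => (matBlock ρ x x).trace with ht
  have ht0 : ∀ x, 0 ≤ t x := fun x =>
    Finset.sum_nonneg fun j _ => psd_diag_nonneg (hblock x) j
  have hcoe : ∀ x, ((t x).re : ℂ) = t x := by
    intro x
    have him := (Complex.nonneg_iff.mp (ht0 x)).2
    exact Complex.ext (by simp) (by simp [him])
  have hsumt : ∑ x, t x = 1 := by
    rw [← htr]
    rw [Matrix.trace]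
    rw [Fintype.sum_prod_type]
    rfl
  -- the families
  set τ : α → Matrix β β ℂ := fun x =>
    if t x = 0 then ((Fintype.card β : ℂ))⁻¹ • 1 else (t x)⁻¹ • matBlock ρ x x with hτ
  have hτgood : ∀ x, (τ x).PosSemidef ∧ (τ x).trace = 1 := by
    intro x
    by_cases h : t x = 0
    · simp only [hτ, h, if_true]
      have hcard : (0:ℂ) < (Fintype.card β : ℂ) := by
        have : 0 < Fintype.card β := Fintype.card_pos
        exact_mod_cast this
      have hcinv : (0:ℂ) ≤ ((Fintype.card β : ℂ))⁻¹ := by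
        have : ((Fintype.card β : ℂ))⁻¹ = (((Fintype.card β : ℝ))⁻¹ : ℂ) := by
          push_cast
          ring
        rw [this]
        exact_mod_cast inv_nonneg.mpr (Nat.cast_nonneg _)
      constructor
      · exact psd_smul Matrix.PosSemidef.one hcinv
      · rw [Matrix.trace_smul, Matrix.trace_one, smul_eq_mul]
        exact inv_mul_cancel₀ hcard.ne'
    · simp only [hτ, h, if_false]
      constructor
      · refine psd_smul (hblock x) ?_
        rw [← hcoe x]
        have : 0 ≤ (t x).re := (Complex.nonneg_iff.mp (ht0 x)).1
        rw [← Complex.ofReal_inv]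
        exact_mod_cast inv_nonneg.mpr this
      · rw [Matrix.trace_smul, smul_eq_mul]
        exact inv_mul_cancel₀ h
  have hτs : ∀ x, (t x) • τ x = matBlock ρ x x := by
    intro x
    by_cases h : t x = 0
    · rw [h, zero_smul]
      exact (psd_trace_zero_eq_zero (hblock x) h).symm
    · simp only [hτ, h, if_false, smul_smul, mul_inv_cancel₀ h, one_smul]
  -- main decomposition over α
  have hdecomp : ρ = ∑ x : α, (t x) • ((Matrix.single x x (1:ℂ)) ⊗ₖ τ x) := by
    ext ⟨a, j⟩ ⟨b, l⟩
    rw [Matrix.sum_apply]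
    by_cases hab : a = b
    · subst hab
      rw [Finset.sum_eq_single a]
      · have := congrFun (congrFun (hτs a) j) l
        simp only [Matrix.smul_apply, Matrix.kroneckerMap_apply, Matrix.single,
          Matrix.of_apply, and_self, if_true, smul_eq_mul, one_mul]
        simpa [Matrix.smul_apply, smul_eq_mul, matBlock] using this.symm
      · intro x _ hx
        simp [Matrix.single, hx]
      · simp
    · rw [hzero a b j l hab]
      refine (Finset.sum_eq_zero fun x _ => ?_).symm
      have : ¬(x = a ∧ x = b) := by rintro ⟨rfl, rfl⟩; exact hab rfl
      simp [Matrix.single, this]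
  -- reindex by Fin
  set e : Fin (Fintype.card α) ≃ α := (Fintype.equivFin α).symm with he
  refine ⟨Fintype.card α, fun k => (t (e k)).re,
    fun k => Matrix.single (e k) (e k) 1, fun k => τ (e k),
    fun k => (Complex.nonneg_iff.mp (ht0 (e k))).1, ?_, ?_, fun k => hτgood (e k), ?_⟩
  · have : ∑ k, (((t (e k)).re : ℂ)) = 1 := by
      rw [Finset.sum_congr rfl fun k _ => hcoe (e k)]
      rw [Fintype.sum_equiv e _ t fun k => rfl]
      exact hsumt
    exact_mod_cast this
  · intro k
    constructor
    · exact psd_stdBasis (e k)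
    · simp [Matrix.trace, Matrix.diag, Matrix.single, Finset.sum_ite_eq']
  · rw [hdecomp]
    rw [← Equiv.sum_comp e (fun x => (t x) • ((Matrix.single x x (1:ℂ)) ⊗ₖ τ x))]
    exact Finset.sum_congr rfl fun k _ => by rw [hcoe (e k)]
end
end
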